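/- For every Bohr set B = B(Γ, δ) in ℤ_M there exists c ∈ [1/2, 1] such that the dilate B_{|c} = B(Γ, cδ) is regular, meaning that for every ρ with 0 < ρ ≤ 2^{−6}/d (d = |Γ|), one has (1 − 2⁶ρd)|B_{|c}| ≤ |B_{|c(1±ρ)}| ≤ (1 + 2⁶ρd)|B_{|c}|. -/

import Mathlib

/-- `‖x/M‖`: distance from `x/M` to the nearest integer, for `x ∈ ℤ_M`. -/
noncomputable def toNearestInt (M : ℕ) [NeZero M] (x : ZMod M) : ℝ :=
  min ((x.val : ℝ) / M) (1 - (x.val : ℝ) / M)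

/-- The Bohr set `B(Γ, δ) = {x ∈ ℤ_M : ‖xr/M‖ ≤ δ ∀ r ∈ Γ}`. -/
noncomputable def bohrSet (M : ℕ) [NeZero M] (Γ : Finset (ZMod M)) (δ : ℝ) :
    Finset (ZMod M) :=
  Finset.univ.filter fun x => ∀ r ∈ Γ, toNearestInt M (x * r) ≤ δ


variable (M : ℕ) [NeZero M]

lemma mem_bohrSet {Γ : Finset (ZMod M)} {ε : ℝ} {x : ZMod M} :
    x ∈ bohrSet M Γ ε ↔ ∀ r ∈ Γ, toNearestInt M (x * r) ≤ ε := by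
  simp [bohrSet]

lemma bohrSet_mono {Γ : Finset (ZMod M)} : Monotone (bohrSet M Γ) := by
  intro a b hab
  intro x hx
  rw [mem_bohrSet] at hx ⊢
  exact fun r hr => (hx r hr).trans hab

lemma toNearestInt_nonneg (x : ZMod M) : 0 ≤ toNearestInt M x := by
  have h1 : (0:ℝ) ≤ (x.val : ℝ) / M := by positivity
  have h2 : (x.val : ℝ) / M < 1 := by
    rw [div_lt_one (by exact_mod_cast Nat.pos_of_ne_zero (NeZero.ne M))]
    exact_mod_cast x.val_lt
  unfold toNearestInt
  rcases min_cases ((x.val : ℝ) / M) (1 - (x.val : ℝ) / M) with ⟨h, _⟩ | ⟨h, _⟩ <;> rw [h] <;> linarith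

lemma zero_mem_bohrSet {Γ : Finset (ZMod M)} {ε : ℝ} (hε : 0 ≤ ε) : (0 : ZMod M) ∈ bohrSet M Γ ε := by
  rw [mem_bohrSet]
  intro r hr
  have : ((0 : ZMod M) * r) = 0 := by ring
  rw [this]
  unfold toNearestInt
  rw [ZMod.val_zero]
  simp
  linarith

lemma one_le_card_bohrSet {Γ : Finset (ZMod M)} {ε : ℝ} (hε : 0 ≤ ε) :
    1 ≤ (bohrSet M Γ ε).card :=
  Finset.card_pos.mpr ⟨0, zero_mem_bohrSet M hε⟩

/-- signed representative of `x/M` in `(-1/2, 1/2]`. -/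
noncomputable def sg (x : ZMod M) : ℝ :=
  if 2 * x.val ≤ M then (x.val : ℝ) / M else (x.val : ℝ) / M - 1

lemma abs_sg (x : ZMod M) : |sg M x| = toNearestInt M x := by
  have hM : (0:ℝ) < M := by exact_mod_cast Nat.pos_of_ne_zero (NeZero.ne M)
  have h1 : (0:ℝ) ≤ (x.val : ℝ) / M := by positivity
  have h2 : (x.val : ℝ) / M < 1 := by
    rw [div_lt_one hM]; exact_mod_cast x.val_lt
  unfold sg toNearestInt
  split_ifs with h
  · have : (x.val:ℝ)/M ≤ 1/2 := by
      rw [div_le_div_iff₀ hM (by norm_num)]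
      push_cast
      exact_mod_cast by push_cast; linarith [show ((2*x.val : ℕ):ℝ) ≤ M by exact_mod_cast h]
    rw [abs_of_nonneg h1, min_eq_left (by linarith)]
  · push_neg at h
    have : 1/2 < (x.val:ℝ)/M := by
      rw [div_lt_div_iff₀ (by norm_num) hM]
      exact_mod_cast by push_cast; linarith [show (M:ℝ) < ((2*x.val : ℕ):ℝ) by exact_mod_cast h]
    rw [abs_of_neg (by linarith), min_eq_right (by linarith)]
    ring

lemma sg_sub_nat (x : ZMod M) : ∃ n : ℤ, sg M x = (x.val : ℝ) / M + n := by
  unfold sg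
  split_ifs
  · exact ⟨0, by simp⟩
  · exact ⟨-1, by push_cast; ring⟩

lemma toNearestInt_le_abs (w : ZMod M) (t : ℝ) (h : ∃ n : ℤ, t = (w.val : ℝ) / M + n) :
    toNearestInt M w ≤ |t| := by
  have hM : (0:ℝ) < M := by exact_mod_cast Nat.pos_of_ne_zero (NeZero.ne M)
  have h1 : (0:ℝ) ≤ (w.val : ℝ) / M := by positivity
  have h2 : (w.val : ℝ) / M < 1 := by
    rw [div_lt_one hM]; exact_mod_cast w.val_lt
  obtain ⟨n, rfl⟩ := h
  unfold toNearestInt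
  rcases lt_trichotomy n 0 with hn | hn | hn
  · have hn1 : n ≤ -1 := by omega
    have : (n:ℝ) ≤ -1 := by exact_mod_cast hn1
    rw [abs_of_neg (by linarith)]
    have := min_le_right ((w.val : ℝ) / M) (1 - (w.val : ℝ) / M)
    linarith
  · subst hn
    simp only [Int.cast_zero, add_zero]
    rw [abs_of_nonneg h1]
    exact min_le_left _ _
  · have : (1:ℝ) ≤ n := by exact_mod_cast hn
    rw [abs_of_nonneg (by linarith)]
    have := min_le_right ((w.val : ℝ) / M) (1 - (w.val : ℝ) / M)
    linarith

lemma sg_sub_sg (a b : ZMod M) :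
    ∃ n : ℤ, sg M a - sg M b = (((a - b).val : ℝ)) / M + n := by
  have hMv : ((((a.val : ℤ) - b.val) : ℤ) : ZMod M) = ((a - b).val : ℤ) := by
    push_cast
    rw [ZMod.natCast_val, ZMod.natCast_val, ZMod.natCast_val]
    simp [ZMod.cast_id]
  have hdvd : (M:ℤ) ∣ ((a.val : ℤ) - b.val - (a-b).val) := by
    rw [← ZMod.intCast_zmod_eq_zero_iff_dvd]
    push_cast
    rw [ZMod.natCast_val, ZMod.natCast_val, ZMod.natCast_val]
    simp [ZMod.cast_id]
  obtain ⟨k, hk⟩ := hdvd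
  obtain ⟨n1, h1⟩ := sg_sub_nat M a
  obtain ⟨n2, h2⟩ := sg_sub_nat M b
  refine ⟨k + n1 - n2, ?_⟩
  have hM : (0:ℝ) < M := by exact_mod_cast Nat.pos_of_ne_zero (NeZero.ne M)
  have hk' : ((a.val : ℝ)) - b.val - ((a-b).val : ℝ) = (M:ℝ) * k := by exact_mod_cast hk
  have key : (((a-b).val : ℝ))/M = (a.val:ℝ)/M - (b.val:ℝ)/M - k := by
    rw [show (((a-b).val):ℝ) = (a.val:ℝ) - (b.val:ℝ) - M*k from by linarith]
    field_simp
  rw [h1, h2, key]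
  push_cast
  ring

lemma bohr_covering {Γ : Finset (ZMod M)} {ε₁ ε₂ : ℝ} (h1 : 0 < ε₁) (h2 : ε₂ < 2 * ε₁)
    (h0 : 0 ≤ ε₂) :
    (bohrSet M Γ ε₂).card ≤ 4 ^ Γ.card * (bohrSet M Γ ε₁).card := by
  classical
  set φ : ZMod M → (↥Γ → ℤ) := fun x r => ⌊(sg M (x * r.1) + ε₂) / ε₁⌋ with hφ
  set t : Finset (↥Γ → ℤ) := Fintype.piFinset (fun _ => Finset.Icc (0:ℤ) 3) with ht
  have hmaps : ∀ x ∈ bohrSet M Γ ε₂, φ x ∈ t := by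
    intro x hx
    rw [mem_bohrSet] at hx
    rw [ht, Fintype.mem_piFinset]
    intro r
    have hr := hx r.1 r.2
    have habs : |sg M (x * r.1)| ≤ ε₂ := by rw [abs_sg]; exact hr
    rw [abs_le] at habs
    rw [Finset.mem_Icc]
    simp only [hφ]
    constructor
    · apply Int.le_floor.mpr
      push_cast
      apply div_nonneg (by linarith [habs.1]) h1.le
    · have : (sg M (x * r.1) + ε₂) / ε₁ < 4 := by
        rw [div_lt_iff₀ h1]
        linarith [habs.2]
      have := Int.floor_lt.mpr (by exact_mod_cast this : (sg M (x * r.1) + ε₂) / ε₁ < ((4:ℤ):ℝ))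
      omega
  have hfib : ∀ b ∈ t, ((bohrSet M Γ ε₂).filter (fun x => φ x = b)).card
      ≤ (bohrSet M Γ ε₁).card := by
    intro b _
    set F := (bohrSet M Γ ε₂).filter (fun x => φ x = b) with hF
    rcases F.eq_empty_or_nonempty with he | ⟨x₀, hx₀⟩
    · simp [he]
    · apply Finset.card_le_card_of_injOn (fun x => x - x₀)
      · intro x hx
        show x - x₀ ∈ bohrSet M Γ ε₁
        rw [mem_bohrSet]
        intro r hr
        have hfx : φ x = φ x₀ := by
          rw [(Finset.mem_filter.mp hx).2, (Finset.mem_filter.mp hx₀).2]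
        have hfeq : ⌊(sg M (x * r) + ε₂) / ε₁⌋ = ⌊(sg M (x₀ * r) + ε₂) / ε₁⌋ := by
          have := congrFun hfx (⟨r, hr⟩ : ↥Γ)
          simpa [hφ] using this
        have hlt : |(sg M (x * r) + ε₂) / ε₁ - (sg M (x₀ * r) + ε₂) / ε₁| < 1 :=
          Int.abs_sub_lt_one_of_floor_eq_floor hfeq
        have hdiff : |sg M (x * r) - sg M (x₀ * r)| < ε₁ := by
          rw [div_sub_div_same, abs_div, abs_of_pos h1, div_lt_one h1] at hlt
          simpa using hlt
        have hsub : (x - x₀) * r = x * r - x₀ * r := by ring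
        rw [hsub]
        calc toNearestInt M (x * r - x₀ * r)
            ≤ |sg M (x * r) - sg M (x₀ * r)| :=
              toNearestInt_le_abs M _ _ (sg_sub_sg M (x * r) (x₀ * r))
          _ ≤ ε₁ := le_of_lt hdiff
      · intro x _ y _ hxy
        simpa using hxy
  calc (bohrSet M Γ ε₂).card ≤ (bohrSet M Γ ε₁).card * t.card :=
        Finset.card_le_mul_card_image_of_maps_to hmaps _ hfib
    _ = 4 ^ Γ.card * (bohrSet M Γ ε₁).card := by
        rw [ht, Fintype.card_piFinset]
        simp [Finset.prod_const, Fintype.card_coe, mul_comm]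

lemma chain_aux {ι : Type*} (F : ℝ → ℝ) (hF : Monotone F) (K R b : ℝ) (hK0 : 0 ≤ K)
    (l r : ι → ℝ) :
    ∀ (n : ℕ) (s : Finset ι) (a p : ℝ), s.card ≤ n → p ≤ a → a ≤ b → b ≤ R →
      (∀ i ∈ s, r i ≤ R ∧ K * (r i - l i) ≤ F (r i) - F (l i)) →
      (∀ i ∈ s, a < r i → p ≤ l i) →
      Set.Icc a b ⊆ ⋃ i ∈ s, Set.Ioo (l i) (r i) →
      K * (b - a) ≤ 2 * F R - F p - F a := by
  classical
  intro n
  induction n with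
  | zero =>
    intro s a p hcard hpa hab hbR _ _ hcov
    have : s = ∅ := Finset.card_eq_zero.mp (Nat.le_zero.mp hcard)
    subst this
    have := hcov (Set.left_mem_Icc.mpr hab)
    simp at this
  | succ n ih =>
    intro s a p hcard hpa hab hbR hprops hinv hcov
    have ha : a ∈ ⋃ i ∈ s, Set.Ioo (l i) (r i) := hcov (Set.left_mem_Icc.mpr hab)
    simp only [Set.mem_iUnion, Set.mem_Ioo, exists_prop] at ha
    obtain ⟨i₁, hi₁s, hi₁⟩ := ha
    set C := s.filter (fun i => l i < a ∧ a < r i) with hC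
    have hCne : C.Nonempty := ⟨i₁, Finset.mem_filter.mpr ⟨hi₁s, hi₁⟩⟩
    obtain ⟨i₀, hi₀C, hmax⟩ := C.exists_max_image r hCne
    have hi₀s : i₀ ∈ s := (Finset.mem_filter.mp hi₀C).1
    have hi₀a : l i₀ < a ∧ a < r i₀ := (Finset.mem_filter.mp hi₀C).2
    have hpl : p ≤ l i₀ := hinv i₀ hi₀s hi₀a.2
    obtain ⟨hrR, hjump⟩ := hprops i₀ hi₀s
    rcases le_or_gt (r i₀) b with hcase | hcase
    · -- recurse
      have hcard' : (s.erase i₀).card ≤ n := by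
        have := Finset.card_erase_of_mem hi₀s
        omega
      have hinv' : ∀ i ∈ s.erase i₀, r i₀ < r i → a ≤ l i := by
        intro i hi hri
        by_contra hla
        push_neg at hla
        have hiC : i ∈ C := Finset.mem_filter.mpr
          ⟨Finset.mem_of_mem_erase hi, hla, lt_trans hi₀a.2 hri⟩
        exact absurd (hmax i hiC) (not_le.mpr hri)
      have hcov' : Set.Icc (r i₀) b ⊆ ⋃ i ∈ s.erase i₀, Set.Ioo (l i) (r i) := by
        intro x hx
        have hx' := hcov ⟨le_trans (le_of_lt hi₀a.2) hx.1, hx.2⟩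
        simp only [Set.mem_iUnion, Set.mem_Ioo, exists_prop] at hx' ⊢
        obtain ⟨i, his, hxi⟩ := hx'
        refine ⟨i, Finset.mem_erase.mpr ⟨?_, his⟩, hxi⟩
        rintro rfl
        exact absurd hxi.2 (not_lt.mpr hx.1)
      have hIH := ih (s.erase i₀) (r i₀) a hcard' (le_of_lt hi₀a.2) hcase hbR
        (fun i hi => hprops i (Finset.mem_of_mem_erase hi)) hinv' hcov'
      have h1 : K * (r i₀ - a) ≤ K * (r i₀ - l i₀) :=
        mul_le_mul_of_nonneg_left (by linarith [hi₀a.1]) hK0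
      have h2 : F p ≤ F (l i₀) := hF hpl
      have : K * (b - a) = K * (b - r i₀) + K * (r i₀ - a) := by ring
      linarith
    · -- single interval finishes
      have h1 : K * (b - a) ≤ K * (r i₀ - l i₀) :=
        mul_le_mul_of_nonneg_left (by linarith [hi₀a.1]) hK0
      have h2 : F p ≤ F (l i₀) := hF hpl
      have h3 : F (r i₀) ≤ F R := hF hrR
      have h4 : F a ≤ F R := hF (hab.trans hbR)
      linarith

lemma chain_lemma {ι : Type*} (F : ℝ → ℝ) (hF : Monotone F) (K L R a b : ℝ) (hK0 : 0 ≤ K)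
    (l r : ι → ℝ) (s : Finset ι) (hab : a ≤ b) (hbR : b ≤ R) (hLa : L ≤ a)
    (hprops : ∀ i ∈ s, L ≤ l i ∧ r i ≤ R ∧ K * (r i - l i) ≤ F (r i) - F (l i))
    (hcov : Set.Icc a b ⊆ ⋃ i ∈ s, Set.Ioo (l i) (r i)) :
    K * (b - a) ≤ 2 * (F R - F L) := by
  have := chain_aux F hF K R b hK0 l r s.card s a L le_rfl hLa hab hbR
    (fun i hi => ⟨(hprops i hi).2.1, (hprops i hi).2.2⟩)
    (fun i hi _ => (hprops i hi).1) hcov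
  have hFa : F L ≤ F a := hF hLa
  linarith

lemma half_le_logb {x : ℝ} (h0 : 0 ≤ x) (h1 : x ≤ 1) : x / 2 ≤ Real.logb 2 (1 + x) := by
  have hx : (0:ℝ) < 1 + x := by linarith
  have hlog : x / (1 + x) ≤ Real.log (1 + x) := by
    have := Real.log_le_sub_one_of_pos (show (0:ℝ) < (1+x)⁻¹ by positivity)
    rw [Real.log_inv] at this
    have h' : (1+x)⁻¹ - 1 = -(x/(1+x)) := by field_simp; ring
    rw [h'] at this
    linarith
  have h2 : x / 2 ≤ x / (1 + x) := div_le_div_of_nonneg_left h0 hx (by linarith)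
  have hlog2 : Real.log 2 ≤ 1 := by
    linarith [Real.log_le_sub_one_of_pos (show (0:ℝ) < 2 by norm_num)]
  have hlog2pos : 0 < Real.log 2 := Real.log_pos (by norm_num)
  rw [Real.logb, le_div_iff₀ hlog2pos]
  nlinarith

lemma logb_nat_mono {m n : ℕ} (h : m ≤ n) :
    Real.logb 2 (m : ℝ) ≤ Real.logb 2 (n : ℝ) := by
  rcases Nat.eq_zero_or_pos m with rfl | hm
  · simp only [Nat.cast_zero, Real.logb_zero]
    rcases Nat.eq_zero_or_pos n with rfl | hn
    · simp
    · exact Real.logb_nonneg (by norm_num) (by exact_mod_cast hn)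
  · exact Real.logb_le_logb_of_le (by norm_num) (by exact_mod_cast hm) (by exact_mod_cast h)

set_option maxHeartbeats 2000000 in
/-- **Bourgain's regularization lemma.** Every Bohr set `B(Γ,δ)` has a dilate `B(Γ,cδ)`
with `c ∈ [1/2,1]` that is regular: for all `0 < ρ ≤ 2⁻⁶/d` (with `d = |Γ|`), both
`|B(Γ, c(1-ρ)δ)|` and `|B(Γ, c(1+ρ)δ)|` lie between `(1 - 2⁶ρd)|B(Γ,cδ)|` and
`(1 + 2⁶ρd)|B(Γ,cδ)|`. -/
theorem bohr_regularization (M : ℕ) [NeZero M] (Γ : Finset (ZMod M)) (δ : ℝ)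
    (hδ : 0 < δ) :
    ∃ c : ℝ, c ∈ Set.Icc (1 / 2 : ℝ) 1 ∧
      ∀ ρ : ℝ, 0 < ρ → ρ ≤ (2 : ℝ) ^ (-6 : ℤ) / (Γ.card : ℝ) →
        ((1 - 2 ^ 6 * ρ * Γ.card) * ((bohrSet M Γ (c * δ)).card : ℝ)
            ≤ ((bohrSet M Γ (c * (1 - ρ) * δ)).card : ℝ) ∧
          ((bohrSet M Γ (c * (1 - ρ) * δ)).card : ℝ)
            ≤ (1 + 2 ^ 6 * ρ * Γ.card) * ((bohrSet M Γ (c * δ)).card : ℝ)) ∧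
        ((1 - 2 ^ 6 * ρ * Γ.card) * ((bohrSet M Γ (c * δ)).card : ℝ)
            ≤ ((bohrSet M Γ (c * (1 + ρ) * δ)).card : ℝ) ∧
          ((bohrSet M Γ (c * (1 + ρ) * δ)).card : ℝ)
            ≤ (1 + 2 ^ 6 * ρ * Γ.card) * ((bohrSet M Γ (c * δ)).card : ℝ)) := by
  classical
  rcases Nat.eq_zero_or_pos Γ.card with hd0 | hd
  · refine ⟨1, ⟨by norm_num, le_rfl⟩, ?_⟩
    intro ρ hρ hρ'
    rw [hd0] at hρ'
    norm_num at hρ'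
    linarith
  have hd1 : (1:ℝ) ≤ (Γ.card : ℝ) := by exact_mod_cast hd
  set dR : ℝ := (Γ.card : ℝ) with hdR
  set ρ₀ : ℝ := (2:ℝ) ^ (-6 : ℤ) / dR with hρ₀
  have hρ₀pos : 0 < ρ₀ := by
    apply div_pos (by positivity) (by linarith)
  have hρ₀le : ρ₀ ≤ 1/64 := by
    rw [hρ₀]
    rw [div_le_iff₀ (by linarith)]
    have : (2:ℝ) ^ (-6 : ℤ) = 1/64 := by norm_num
    rw [this]
    nlinarith
  set F : ℝ → ℝ := fun c => Real.logb 2 ((bohrSet M Γ (c * δ)).card : ℝ) with hF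
  have hFmono : Monotone F := by
    intro c c' hcc
    apply logb_nat_mono
    apply Finset.card_le_card
    apply bohrSet_mono
    exact mul_le_mul_of_nonneg_right hcc hδ.le
  by_contra hcon
  -- every c in [3/5, 9/10] is bad
  have hbad : ∀ c ∈ Set.Icc (3/5 : ℝ) (9/10), ∃ ρ : ℝ, 0 < ρ ∧ ρ ≤ ρ₀ ∧
      ((1 + 2^6 * ρ * dR) * ((bohrSet M Γ (c * δ)).card : ℝ)
          < ((bohrSet M Γ (c * (1 + ρ) * δ)).card : ℝ) ∨
        ((bohrSet M Γ (c * (1 - ρ) * δ)).card : ℝ)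
          < (1 - 2^6 * ρ * dR) * ((bohrSet M Γ (c * δ)).card : ℝ)) := by
    intro c hc
    by_contra hgood
    push_neg at hgood
    apply hcon
    refine ⟨c, ⟨by linarith [hc.1], by linarith [hc.2]⟩, ?_⟩
    intro ρ h1 h2
    obtain ⟨hA, hB⟩ := hgood ρ h1 h2
    have hx0 : 0 < 2^6 * ρ * dR := by positivity
    have hmono1 : ((bohrSet M Γ (c * (1 - ρ) * δ)).card : ℝ)
        ≤ ((bohrSet M Γ (c * δ)).card : ℝ) := by
      have : c * (1 - ρ) * δ ≤ c * δ := by nlinarith [mul_pos (mul_pos (show (0:ℝ) < c by linarith [hc.1]) h1) hδ]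
      exact_mod_cast Finset.card_le_card (bohrSet_mono M this)
    have hmono2 : ((bohrSet M Γ (c * δ)).card : ℝ)
        ≤ ((bohrSet M Γ (c * (1 + ρ) * δ)).card : ℝ) := by
      have : c * δ ≤ c * (1 + ρ) * δ := by nlinarith [mul_pos (mul_pos (show (0:ℝ) < c by linarith [hc.1]) h1) hδ]
      exact_mod_cast Finset.card_le_card (bohrSet_mono M this)
    have hcard0 : (0:ℝ) ≤ ((bohrSet M Γ (c * δ)).card : ℝ) := by positivity
    exact ⟨⟨hB, by nlinarith⟩, ⟨by nlinarith, hA⟩⟩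
  -- choose the bad scale for each c
  obtain ⟨ρf, hρf0, hρfspec⟩ : ∃ ρf : ℝ → ℝ,
      (∀ c, c ∉ Set.Icc (3/5 : ℝ) (9/10) → ρf c = 0) ∧
      (∀ c, c ∈ Set.Icc (3/5 : ℝ) (9/10) → 0 < ρf c ∧ ρf c ≤ ρ₀ ∧
        ((1 + 2^6 * ρf c * dR) * ((bohrSet M Γ (c * δ)).card : ℝ)
            < ((bohrSet M Γ (c * (1 + ρf c) * δ)).card : ℝ) ∨
          ((bohrSet M Γ (c * (1 - ρf c) * δ)).card : ℝ)
            < (1 - 2^6 * ρf c * dR) * ((bohrSet M Γ (c * δ)).card : ℝ))) := by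
    refine ⟨fun c => if hc : c ∈ Set.Icc (3/5 : ℝ) (9/10) then (hbad c hc).choose else 0,
      ?_, ?_⟩
    · intro c hc
      simp only [dif_neg hc]
    · intro c hc
      simp only [dif_pos hc]
      exact (hbad c hc).choose_spec
  -- compactness: finite subcover
  have hopen : ∀ c : ℝ, IsOpen (Set.Ioo (c * (1 - ρf c)) (c * (1 + ρf c))) :=
    fun c => isOpen_Ioo
  have hcov0 : Set.Icc (3/5 : ℝ) (9/10) ⊆
      ⋃ c, Set.Ioo (c * (1 - ρf c)) (c * (1 + ρf c)) := by
    intro y hy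
    obtain ⟨hρpos, -, -⟩ := hρfspec y hy
    have hy1 : (3/5:ℝ) ≤ y := hy.1
    have hyρ : 0 < y * ρf y := mul_pos (by linarith) hρpos
    refine Set.mem_iUnion.mpr ⟨y, ?_⟩
    constructor
    · nlinarith
    · nlinarith
  obtain ⟨t, ht⟩ := isCompact_Icc.elim_finite_subcover _ hopen hcov0
  have hdec : DecidablePred (fun c : ℝ => c ∈ Set.Icc (3/5 : ℝ) (9/10)) := fun _ =>
    Classical.propDecidable _
  set t' : Finset ℝ := t.filter (fun c => c ∈ Set.Icc (3/5 : ℝ) (9/10)) with ht'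
  have hcov : Set.Icc (3/5 : ℝ) (9/10) ⊆
      ⋃ c ∈ t', Set.Ioo (c * (1 - ρf c)) (c * (1 + ρf c)) := by
    intro y hy
    have hyt := ht hy
    simp only [Set.mem_iUnion, exists_prop] at hyt ⊢
    obtain ⟨c, hct, hyc⟩ := hyt
    have hcIcc : c ∈ Set.Icc (3/5 : ℝ) (9/10) := by
      by_contra hcn
      rw [hρf0 c hcn] at hyc
      rw [Set.mem_Ioo] at hyc
      obtain ⟨h1, h2⟩ := hyc
      simp only [sub_zero, add_zero, mul_one] at h1 h2
      linarith
    exact ⟨c, Finset.mem_filter.mpr ⟨hct, hcIcc⟩, hyc⟩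
  -- per-window properties
  have hprops : ∀ c ∈ t', (59/100 : ℝ) ≤ c * (1 - ρf c) ∧ c * (1 + ρf c) ≤ 92/100 ∧
      16 * dR * (c * (1 + ρf c) - c * (1 - ρf c)) ≤ F (c * (1 + ρf c)) - F (c * (1 - ρf c)) := by
    intro c hct'
    have hc : c ∈ Set.Icc (3/5 : ℝ) (9/10) := (Finset.mem_filter.mp hct').2
    obtain ⟨hρpos, hρle, hviol⟩ := hρfspec c hc
    have hρ64 : ρf c ≤ 1/64 := hρle.trans hρ₀le
    have hc1 : (3/5 : ℝ) ≤ c := hc.1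
    have hc2 : c ≤ (9/10 : ℝ) := hc.2
    have hwl : (59/100:ℝ) ≤ c * (1 - ρf c) := by
      have e1 : (0:ℝ) ≤ 1 - ρf c := by linarith
      have e2 := mul_le_mul_of_nonneg_right hc1 e1
      linarith
    have hwr : c * (1 + ρf c) ≤ 92/100 := by
      have e1 : (0:ℝ) ≤ 1 + ρf c := by linarith
      have e2 := mul_le_mul_of_nonneg_right hc2 e1
      linarith
    refine ⟨hwl, hwr, ?_⟩
    set x : ℝ := 2^6 * ρf c * dR with hxdef
    have hx0 : 0 < x := by
      rw [hxdef]
      exact mul_pos (mul_pos (by norm_num) hρpos) (by linarith)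
    have hx1 : x ≤ 1 := by
      rw [hxdef]
      have h2 := hρle
      rw [hρ₀] at h2
      have h1 : ρf c * dR ≤ (2:ℝ)^(-6:ℤ) :=
        (le_div_iff₀ (by linarith : (0:ℝ) < dR)).mp h2
      have h26 : ((2:ℝ)^(-6:ℤ) : ℝ) = 1/64 := by norm_num
      rw [h26] at h1
      linarith
    have hGc1 : (1:ℝ) ≤ ((bohrSet M Γ (c * δ)).card : ℝ) := by
      exact_mod_cast one_le_card_bohrSet M (mul_nonneg (by linarith) hδ.le)
    have hGl1 : (1:ℝ) ≤ ((bohrSet M Γ (c * (1 - ρf c) * δ)).card : ℝ) := by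
      have : (0:ℝ) ≤ c * (1 - ρf c) * δ :=
        mul_nonneg (mul_nonneg (by linarith) (by linarith)) hδ.le
      exact_mod_cast one_le_card_bohrSet M this
    have hlogb : ∀ A B : ℝ, 1 ≤ A → (1 + x) * A ≤ B →
        Real.logb 2 A + x/2 ≤ Real.logb 2 B := by
      intro A B hA hAB
      have hApos : (0:ℝ) < A := by linarith
      have h1x : (0:ℝ) < 1 + x := by linarith
      have h1 : Real.logb 2 ((1+x) * A) ≤ Real.logb 2 B :=
        Real.logb_le_logb_of_le (by norm_num) (mul_pos h1x hApos) hAB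
      rw [Real.logb_mul (ne_of_gt h1x) (ne_of_gt hApos)] at h1
      have h2 := half_le_logb hx0.le hx1
      linarith
    have hFr : F (c * (1 + ρf c)) =
        Real.logb 2 ((bohrSet M Γ (c * (1 + ρf c) * δ)).card : ℝ) := by
      simp only [hF]
    have hFl : F (c * (1 - ρf c)) =
        Real.logb 2 ((bohrSet M Γ (c * (1 - ρf c) * δ)).card : ℝ) := by
      simp only [hF]
    have hFc : F c = Real.logb 2 ((bohrSet M Γ (c * δ)).card : ℝ) := by
      simp only [hF]
    have hcρ : (0:ℝ) ≤ c * ρf c := mul_nonneg (by linarith) hρpos.le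
    have hjump : x/2 ≤ F (c * (1 + ρf c)) - F (c * (1 - ρf c)) := by
      rcases hviol with hA | hB
      · have h1 : Real.logb 2 ((bohrSet M Γ (c * δ)).card : ℝ) + x/2
            ≤ Real.logb 2 ((bohrSet M Γ (c * (1 + ρf c) * δ)).card : ℝ) :=
          hlogb _ _ hGc1 hA.le
        have h2 : F (c * (1 - ρf c)) ≤ F c := hFmono (by linarith)
        linarith [hFr, hFc, h1, h2]
      · have hxlt : 1 - x > 0 := by
          by_contra hxx
          push_neg at hxx
          nlinarith [hB, hGl1, hGc1]
        have hstep : (1 + x) * ((bohrSet M Γ (c * (1 - ρf c) * δ)).card : ℝ)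
            ≤ ((bohrSet M Γ (c * δ)).card : ℝ) := by
          nlinarith [hB, hGc1, hx0, sq_nonneg x]
        have h1 : Real.logb 2 ((bohrSet M Γ (c * (1 - ρf c) * δ)).card : ℝ) + x/2
            ≤ Real.logb 2 ((bohrSet M Γ (c * δ)).card : ℝ) :=
          hlogb _ _ hGl1 hstep
        have h2 : F c ≤ F (c * (1 + ρf c)) := hFmono (by linarith)
        linarith [hFl, hFc, h1, h2]
    have hslope : 16 * dR * (c * (1 + ρf c) - c * (1 - ρf c)) ≤ x/2 := by
      rw [hxdef]
      have hh : (0:ℝ) ≤ dR * ρf c * (1 - c) :=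
        mul_nonneg (mul_nonneg (by linarith) hρpos.le) (by linarith)
      nlinarith [hh]
    linarith [hslope, hjump]
  -- chain the windows
  have hchain := chain_lemma F hFmono (16 * dR) (59/100) (92/100) (3/5) (9/10)
    (by linarith) (fun c => c * (1 - ρf c)) (fun c => c * (1 + ρf c)) t'
    (by norm_num) (by norm_num) (by norm_num) hprops hcov
  -- covering bound on total increase
  have hcovbd : F (92/100) - F (59/100) ≤ 2 * dR := by
    have e1 : (0:ℝ) < 59/100 * δ := by linarith
    have e2 : (92/100 : ℝ) * δ < 2 * (59/100 * δ) := by linarith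
    have e3 : (0:ℝ) ≤ 92/100 * δ := by linarith
    have hcard := bohr_covering M (Γ := Γ) e1 e2 e3
    have hle : ((bohrSet M Γ (92/100 * δ)).card : ℝ)
        ≤ (4:ℝ)^Γ.card * ((bohrSet M Γ (59/100 * δ)).card : ℝ) := by
      exact_mod_cast hcard
    have hG1 : (1:ℝ) ≤ ((bohrSet M Γ (59/100 * δ)).card : ℝ) := by
      exact_mod_cast one_le_card_bohrSet M (by positivity)
    have h4pos : (0:ℝ) < (4:ℝ)^Γ.card := by positivity
    have hlog : Real.logb 2 ((bohrSet M Γ (92/100 * δ)).card : ℝ)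
        ≤ Real.logb 2 ((4:ℝ)^Γ.card * ((bohrSet M Γ (59/100 * δ)).card : ℝ)) := by
      rcases Nat.eq_zero_or_pos (bohrSet M Γ (92/100 * δ)).card with h0 | hpos
      · rw [h0]
        simp only [Nat.cast_zero, Real.logb_zero]
        apply Real.logb_nonneg (by norm_num)
        have h41 : (1:ℝ) ≤ (4:ℝ)^Γ.card := one_le_pow₀ (by norm_num)
        nlinarith [h41, hG1]
      · exact Real.logb_le_logb_of_le (by norm_num) (by exact_mod_cast hpos) hle
    rw [Real.logb_mul (ne_of_gt h4pos) (by linarith)] at hlog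
    have h4 : Real.logb 2 ((4:ℝ)^Γ.card) = 2 * dR := by
      have h42 : (4:ℝ) = 2^(2:ℕ) := by norm_num
      rw [h42, ← pow_mul, Real.logb_pow]
      have hl2 : Real.logb 2 2 = 1 := Real.logb_self_eq_one (by norm_num)
      rw [hl2, hdR]
      push_cast
      ring
    have hF92 : F (92/100) = Real.logb 2 ((bohrSet M Γ (92/100 * δ)).card : ℝ) := by
      simp only [hF]
    have hF59 : F (59/100) = Real.logb 2 ((bohrSet M Γ (59/100 * δ)).card : ℝ) := by
      simp only [hF]
    linarith [hlog, hF92, hF59, h4]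
  -- final contradiction
  nlinarith [hchain, hcovbd, hd1]
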